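/- For the symmetric algorithm: in every fair execution, if at some step the shared variable turn is assigned the value a (either by process a itself at state 3.5.2, or by some process setting turn:=nextTurn=a when moving to state 8 while process a waits at state 2 or 4), then process a eventually enters the critical section. -/
import Mathlib


/-!
Model of the symmetric mutual-exclusion algorithm (no coordinator).

Shared variables: `turn ∈ {0,…,N−1, THINKING, FREE}` (initially FREE) and
`flag : Fin N → {REMAINDER, WAITING, CANDIDATE}` (initially all REMAINDER,
`flag[i]` writable only by process `i`).

Entry automaton for process `i` (program-counter states):
* `s1`   : set `flag[i] := WAITING`, go to `s2`;
* `s2`   : wait while `turn = THINKING`; if `turn = FREE` go to `s3`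
           (beginning of the candidate phase); if `turn` is a process
           identifier, go to `s4`;
* `s3`   : set `flag[i] := CANDIDATE`, go to `s32` (state 3.2);
* `s32`  : repeat-loop test: if `turn = FREE ∧ flag[i] = CANDIDATE`
           go to `s33` (state 3.3), otherwise leave the loop to `s37`;
* `s33`  : set `nCandidates := 0`, `minCandidate := −1`, initialize the scan
           counter, go to `s34`;
* `s34`  : scan loop (states 3.4/3.4.1/3.4.2), `j` from `N−1` down to `0`:
           if the scan is over, go to `s35`; otherwise inspect `flag[j]`:
           if it is CANDIDATE go to `s341` else decrement `j`;
* `s341` : set `nCandidates := nCandidates + 1`, `minCandidate := j`,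
           decrement `j`, back to `s34`;
* `s35`  : if `turn = FREE ∧ nCandidates = 1` go to `s351` (state 3.5.1),
           otherwise go to `s36`;
* `s351` : set `turn := i`, go to `s352` (state 3.5.2);
* `s352` : go to `s36`;
* `s36`  : if `turn ≠ FREE ∨ minCandidate < i` set `flag[i] := WAITING`
           (state 3.6); in either case return to the repeat test `s32`;
* `s37`  : after the repeat ends, set `flag[i] := WAITING`, go to `s4`;
* `s4`   : wait until `turn = i`, then enter the critical section `cs`.

Exit automaton for process `i`:
* `cs`   : set `turn := THINKING`, go to `s5` (state 5);
* `s5`   : set `flag[i] := REMAINDER`, `nextTurn := THINKING`, initialize the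
           scan counter, go to `s6`;
* `s6`   : loop (states 6/6.1/6.2) with `j` over `i+1,…,N−1,0,…,i−1` while
           `nextTurn = THINKING`: if `flag[j] ≠ REMAINDER` set
           `nextTurn := j`; when the loop ends go to `s63` (state 6.3);
* `s63`  : if `nextTurn = THINKING` set `turn := FREE` else
           `turn := nextTurn`; go to `s8` (state 8).
-/

namespace Sym

/-- Values of the shared variable `turn` (and of `nextTurn`). -/
inductive Turn (N : ℕ)
  | free
  | thinking
  | id : Fin N → Turn N
  deriving DecidableEq

inductive Flag
  | remainder | waiting | candidate
  deriving DecidableEq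

/-- Program counter of a process. -/
inductive PC
  | s1 | s2 | s3 | s32 | s33 | s34 | s341 | s35 | s351 | s352 | s36 | s37
  | s4 | cs | s5 | s6 | s63 | s8
  deriving DecidableEq

/-- A global state: shared variables plus each process's program counter and
local variables (`cnt` is the loop counter `j`, reused by the candidate scan
and the exit scan). -/
structure St (N : ℕ) where
  turn : Turn N
  flag : Fin N → Flag
  pc : Fin N → PC
  nCand : Fin N → ℕ
  minCand : Fin N → ℤ
  nextTurn : Fin N → Turn N
  cnt : Fin N → ℕ

/-- The initial global state. -/
def initSt (N : ℕ) : St N where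
  turn := .free
  flag := fun _ => .remainder
  pc := fun _ => .s1
  nCand := fun _ => 0
  minCand := fun _ => 0
  nextTurn := fun _ => .thinking
  cnt := fun _ => 0

/-- In the exit scan of process `i`, the index examined when the counter is
`k` is `(i + k + 1) mod N`: the scan order is `i+1, …, N−1, 0, …, i−1`. -/
def nxt {N : ℕ} (i : Fin N) (k : ℕ) : Fin N :=
  ⟨(i.val + k + 1) % N, Nat.mod_lt _ i.pos⟩

/-- One enabled transition of process `i`. -/
inductive Step {N : ℕ} : Fin N → St N → St N → Prop
  | t1 (s : St N) (i : Fin N) (h : s.pc i = .s1) :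
      Step i s { s with flag := Function.update s.flag i .waiting,
                        pc := Function.update s.pc i .s2 }
  | t2free (s : St N) (i : Fin N) (h : s.pc i = .s2) (ht : s.turn = .free) :
      Step i s { s with pc := Function.update s.pc i .s3 }
  | t2id (s : St N) (i j : Fin N) (h : s.pc i = .s2) (ht : s.turn = .id j) :
      Step i s { s with pc := Function.update s.pc i .s4 }
  | t3 (s : St N) (i : Fin N) (h : s.pc i = .s3) :
      Step i s { s with flag := Function.update s.flag i .candidate,
                        pc := Function.update s.pc i .s32 }
  | t32enter (s : St N) (i : Fin N) (h : s.pc i = .s32)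
      (ht : s.turn = .free) (hf : s.flag i = .candidate) :
      Step i s { s with pc := Function.update s.pc i .s33 }
  | t32exit (s : St N) (i : Fin N) (h : s.pc i = .s32)
      (hc : ¬ (s.turn = .free ∧ s.flag i = .candidate)) :
      Step i s { s with pc := Function.update s.pc i .s37 }
  | t33 (s : St N) (i : Fin N) (h : s.pc i = .s33) :
      Step i s { s with nCand := Function.update s.nCand i 0,
                        minCand := Function.update s.minCand i (-1),
                        cnt := Function.update s.cnt i N,
                        pc := Function.update s.pc i .s34 }
  | t34done (s : St N) (i : Fin N) (h : s.pc i = .s34) (hc : s.cnt i = 0) :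
      Step i s { s with pc := Function.update s.pc i .s35 }
  | t34cand (s : St N) (i j : Fin N) (h : s.pc i = .s34) (hc : s.cnt i ≠ 0)
      (hj : (j : ℕ) = s.cnt i - 1) (hf : s.flag j = .candidate) :
      Step i s { s with pc := Function.update s.pc i .s341 }
  | t34nocand (s : St N) (i j : Fin N) (h : s.pc i = .s34) (hc : s.cnt i ≠ 0)
      (hj : (j : ℕ) = s.cnt i - 1) (hf : s.flag j ≠ .candidate) :
      Step i s { s with cnt := Function.update s.cnt i (s.cnt i - 1),
                        pc := Function.update s.pc i .s34 }
  | t341 (s : St N) (i : Fin N) (h : s.pc i = .s341) :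
      Step i s { s with nCand := Function.update s.nCand i (s.nCand i + 1),
                        minCand := Function.update s.minCand i ((s.cnt i : ℤ) - 1),
                        cnt := Function.update s.cnt i (s.cnt i - 1),
                        pc := Function.update s.pc i .s34 }
  | t35yes (s : St N) (i : Fin N) (h : s.pc i = .s35)
      (ht : s.turn = .free) (hn : s.nCand i = 1) :
      Step i s { s with pc := Function.update s.pc i .s351 }
  | t35no (s : St N) (i : Fin N) (h : s.pc i = .s35)
      (hc : ¬ (s.turn = .free ∧ s.nCand i = 1)) :
      Step i s { s with pc := Function.update s.pc i .s36 }
  | t351 (s : St N) (i : Fin N) (h : s.pc i = .s351) :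
      Step i s { s with turn := .id i, pc := Function.update s.pc i .s352 }
  | t352 (s : St N) (i : Fin N) (h : s.pc i = .s352) :
      Step i s { s with pc := Function.update s.pc i .s36 }
  | t36yes (s : St N) (i : Fin N) (h : s.pc i = .s36)
      (hc : s.turn ≠ .free ∨ s.minCand i < (i : ℤ)) :
      Step i s { s with flag := Function.update s.flag i .waiting,
                        pc := Function.update s.pc i .s32 }
  | t36no (s : St N) (i : Fin N) (h : s.pc i = .s36)
      (hc : ¬ (s.turn ≠ .free ∨ s.minCand i < (i : ℤ))) :
      Step i s { s with pc := Function.update s.pc i .s32 }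
  | t37 (s : St N) (i : Fin N) (h : s.pc i = .s37) :
      Step i s { s with flag := Function.update s.flag i .waiting,
                        pc := Function.update s.pc i .s4 }
  | t4 (s : St N) (i : Fin N) (h : s.pc i = .s4) (ht : s.turn = .id i) :
      Step i s { s with pc := Function.update s.pc i .cs }
  | tcs (s : St N) (i : Fin N) (h : s.pc i = .cs) :
      Step i s { s with turn := .thinking, pc := Function.update s.pc i .s5 }
  | t5 (s : St N) (i : Fin N) (h : s.pc i = .s5) :
      Step i s { s with flag := Function.update s.flag i .remainder,
                        nextTurn := Function.update s.nextTurn i .thinking,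
                        cnt := Function.update s.cnt i 0,
                        pc := Function.update s.pc i .s6 }
  | t6exit (s : St N) (i : Fin N) (h : s.pc i = .s6)
      (hc : s.nextTurn i ≠ .thinking ∨ s.cnt i = N - 1) :
      Step i s { s with pc := Function.update s.pc i .s63 }
  | t6found (s : St N) (i : Fin N) (h : s.pc i = .s6)
      (hnt : s.nextTurn i = .thinking) (hcnt : s.cnt i ≠ N - 1)
      (hf : s.flag (nxt i (s.cnt i)) ≠ .remainder) :
      Step i s { s with
        nextTurn := Function.update s.nextTurn i (.id (nxt i (s.cnt i))),
        cnt := Function.update s.cnt i (s.cnt i + 1),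
        pc := Function.update s.pc i .s6 }
  | t6notfound (s : St N) (i : Fin N) (h : s.pc i = .s6)
      (hnt : s.nextTurn i = .thinking) (hcnt : s.cnt i ≠ N - 1)
      (hf : s.flag (nxt i (s.cnt i)) = .remainder) :
      Step i s { s with cnt := Function.update s.cnt i (s.cnt i + 1),
                        pc := Function.update s.pc i .s6 }
  | t63free (s : St N) (i : Fin N) (h : s.pc i = .s63)
      (hn : s.nextTurn i = .thinking) :
      Step i s { s with turn := .free, pc := Function.update s.pc i .s8 }
  | t63id (s : St N) (i b : Fin N) (h : s.pc i = .s63)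
      (hn : s.nextTurn i = .id b) :
      Step i s { s with turn := .id b, pc := Function.update s.pc i .s8 }

/-- An execution: a sequence of global states starting from the initial
state, together with a schedule; at each instant either exactly one process
takes one of its enabled transitions, or (if `none` is scheduled) the state
stutters. -/
structure Exec (N : ℕ) where
  states : ℕ → St N
  sched : ℕ → Option (Fin N)
  init : states 0 = initSt N
  step : ∀ n, match sched n with
    | some i => Step i (states n) (states (n + 1))
    | none => states (n + 1) = states n

/-- A process is enabled if it can take a transition. -/
def Enabled {N : ℕ} (i : Fin N) (s : St N) : Prop :=
  ∃ s', Step i s s'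

/-- Weak fairness: a process whose next transition is continuously enabled
eventually takes it. -/
def Exec.Fair {N : ℕ} (e : Exec N) : Prop :=
  ∀ i n, (∀ m, n ≤ m → Enabled i (e.states m)) → ∃ m, n ≤ m ∧ e.sched m = some i

/-- A state is reachable if it occurs in some execution. -/
def Reachable {N : ℕ} (s : St N) : Prop :=
  ∃ e : Exec N, ∃ n, e.states n = s

/-- The extended critical section: program-counter states in `[CS, 8)`. -/
def ExtCS : PC → Prop := fun p => p = .cs ∨ p = .s5 ∨ p = .s6 ∨ p = .s63

/-- Program-counter states in the interval `[3, 4]`: from entering the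
candidate phase up to (and including) waiting at state 4. -/
def In34 : PC → Prop := fun p =>
  p = .s3 ∨ p = .s32 ∨ p = .s33 ∨ p = .s34 ∨ p = .s341 ∨ p = .s35 ∨
  p = .s351 ∨ p = .s352 ∨ p = .s36 ∨ p = .s37 ∨ p = .s4

/-- Position of `x` in the cyclic order `a+1, …, N−1, 0, …, a−1, a`
starting just after `a` (so `rank a (a+1) = 0` and `rank a a = N−1`). -/
def rank {N : ℕ} (a x : Fin N) : ℕ := (x.val + N - a.val - 1) % N

end Sym

namespace Sym

variable {N : ℕ}

/-- Program-counter states in the candidate-scan phase. -/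
def isSP (p : PC) : Prop :=
  p = .s34 ∨ p = .s341 ∨ p = .s35 ∨ p = .s351 ∨ p = .s352

/-- Program-counter states in the "privileged" region. -/
def isCrit (p : PC) : Prop :=
  p = .s351 ∨ p = .s352 ∨ p = .cs ∨ p = .s5 ∨ p = .s6 ∨ p = .s63

/-- "Index `x` has already been examined by the scan." -/
def examF (p : PC) (c x : ℕ) : Prop :=
  (p = .s34 ∧ c ≤ x) ∨ (p = .s341 ∧ c ≤ x + 1) ∨ p = .s35 ∨ p = .s351 ∨ p = .s352

def scoreF (p : PC) (nc : ℕ) : ℕ := if p = .s341 then nc + 1 else nc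

def exam (s : St N) (i x : Fin N) : Prop := examF (s.pc i) (s.cnt i) x.val

def score (s : St N) (i : Fin N) : ℕ := scoreF (s.pc i) (s.nCand i)

/-- The global inductive invariant. -/
structure Inv (s : St N) : Prop where
  flagC : ∀ i, (s.pc i = .s33 ∨ isSP (s.pc i)) → s.flag i = .candidate
  selfS : ∀ i, isSP (s.pc i) → exam s i i → 1 ≤ score s i
  pair : ∀ A B, A ≠ B → isSP (s.pc A) → isSP (s.pc B) → exam s A B → exam s B A →
      score s A ≤ 1 → (score s A = 0 ∨ exam s A A) →
      1 ≤ score s B ∧ (exam s B B → 2 ≤ score s B)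
  nOne : ∀ i, (s.pc i = .s351 ∨ s.pc i = .s352) → s.nCand i = 1
  mutex : ∀ i j, i ≠ j → isCrit (s.pc i) → isCrit (s.pc j) → False
  csT : ∀ i, s.pc i = .cs → s.turn = .id i
  exT : ∀ i, (s.pc i = .s5 ∨ s.pc i = .s6 ∨ s.pc i = .s63) → s.turn = .thinking
  candT : ∀ i, (s.pc i = .s351 ∨ s.pc i = .s352) → s.turn = .free ∨ s.turn = .id i
  c341 : ∀ i, s.pc i = .s341 → s.cnt i ≠ 0

lemma pc_ne {q : Fin N} {s s' : St N} (hs : Step q s s') {k : Fin N} (hk : k ≠ q) :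
    s'.pc k = s.pc k := by
  cases hs <;> simp [Function.update_apply, hk]

lemma cnt_ne {q : Fin N} {s s' : St N} (hs : Step q s s') {k : Fin N} (hk : k ≠ q) :
    s'.cnt k = s.cnt k := by
  cases hs <;> simp [Function.update_apply, hk]

lemma nCand_ne {q : Fin N} {s s' : St N} (hs : Step q s s') {k : Fin N} (hk : k ≠ q) :
    s'.nCand k = s.nCand k := by
  cases hs <;> simp [Function.update_apply, hk]

lemma flag_ne {q : Fin N} {s s' : St N} (hs : Step q s s') {k : Fin N} (hk : k ≠ q) :
    s'.flag k = s.flag k := by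
  cases hs <;> simp [Function.update_apply, hk]

lemma exam_ne {q : Fin N} {s s' : St N} (hs : Step q s s') {k : Fin N} (hk : k ≠ q)
    (x : Fin N) : exam s' k x ↔ exam s k x := by
  unfold exam; rw [pc_ne hs hk, cnt_ne hs hk]

lemma score_ne {q : Fin N} {s s' : St N} (hs : Step q s s') {k : Fin N} (hk : k ≠ q) :
    score s' k = score s k := by
  unfold score; rw [pc_ne hs hk, nCand_ne hs hk]

end Sym

namespace Sym
variable {N : ℕ}

lemma flagC_pres {q : Fin N} {s s' : St N} (hs : Step q s s') (h : Inv s) :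
    ∀ i, (s'.pc i = .s33 ∨ isSP (s'.pc i)) → s'.flag i = .candidate := by
  intro i hi
  have h1 := h.flagC i
  by_cases hiq : i = q
  · subst hiq
    cases hs <;> simp_all [isSP, Function.update_self]
  · rw [pc_ne hs hiq] at hi
    rw [flag_ne hs hiq]
    exact h1 hi

lemma nOne_pres {q : Fin N} {s s' : St N} (hs : Step q s s') (h : Inv s) :
    ∀ i, (s'.pc i = .s351 ∨ s'.pc i = .s352) → s'.nCand i = 1 := by
  intro i hi
  have h1 := h.nOne i
  by_cases hiq : i = q
  · subst hiq
    cases hs <;> simp_all [Function.update_self]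
  · rw [pc_ne hs hiq] at hi
    rw [nCand_ne hs hiq]
    exact h1 hi

lemma c341_pres {q : Fin N} {s s' : St N} (hs : Step q s s') (h : Inv s) :
    ∀ i, s'.pc i = .s341 → s'.cnt i ≠ 0 := by
  intro i hi
  have h1 := h.c341 i
  by_cases hiq : i = q
  · subst hiq
    cases hs <;> simp_all [Function.update_self]
  · rw [pc_ne hs hiq] at hi
    rw [cnt_ne hs hiq]
    exact h1 hi

end Sym

namespace Sym
variable {N : ℕ}

lemma selfS_pres {q : Fin N} {s s' : St N} (hs : Step q s s') (h : Inv s) :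
    ∀ i, isSP (s'.pc i) → exam s' i i → 1 ≤ score s' i := by
  intro i hi he
  by_cases hiq : i = q
  · subst hiq
    have h1 := h.selfS i
    have h2 := h.flagC i
    cases hs with
    | t33 s i hpc =>
        exfalso
        have := i.isLt
        simp only [exam, examF, Function.update_self, score] at he
        simp_all [isSP]
        omega
    | t34done s i hpc hc =>
        simp only [exam, examF, score, scoreF, Function.update_self] at he ⊢
        have := h1 (Or.inl hpc) (Or.inl ⟨hpc, by omega⟩)
        simpa [score, scoreF, hpc] using this
    | t34cand s i j hpc hc hj hf =>
        simp only [score, scoreF, Function.update_self]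
        simp
    | t34nocand s i j hpc hc hj hf =>
        have hji : j ≠ i := by
          intro hh
          exact hf (by rw [hh]; exact h2 (Or.inr (Or.inl hpc)))
        have hvne : (j : ℕ) ≠ i.val := fun hh => hji (Fin.ext hh)
        simp only [exam, examF, Function.update_self, Function.update_apply] at he
        have hcle : s.cnt i ≤ i.val := by
          rcases he with ⟨_, h'⟩ | ⟨h', _⟩ | h' | h' | h' <;> first
            | omega
            | simp_all
        have := h1 (Or.inl hpc) (Or.inl ⟨hpc, hcle⟩)
        simpa [score, scoreF, hpc, Function.update_self] using this
    | t341 s i hpc =>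
        simp [score, scoreF, Function.update_self]
    | t35yes s i hpc ht hn =>
        have := h1 (by simp [isSP, hpc]) (by simp [exam, examF, hpc])
        simpa [score, scoreF, hpc, Function.update_self] using this
    | t351 s i hpc =>
        have := h1 (by simp [isSP, hpc]) (by simp [exam, examF, hpc])
        simpa [score, scoreF, hpc, Function.update_self] using this
    | _ => simp_all [isSP, Function.update_self]
  · rw [pc_ne hs hiq] at hi
    rw [exam_ne hs hiq] at he
    rw [score_ne hs hiq]
    exact h.selfS i hi he

end Sym

namespace Sym
variable {N : ℕ}

lemma exam_s34 {s : St N} {A x : Fin N} (hpc : s.pc A = .s34) (hle : s.cnt A ≤ x.val) :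
    exam s A x := Or.inl ⟨hpc, hle⟩

lemma exam_s341 {s : St N} {A x : Fin N} (hpc : s.pc A = .s341) (hle : s.cnt A ≤ x.val + 1) :
    exam s A x := Or.inr (Or.inl ⟨hpc, hle⟩)

lemma score_s34 {s : St N} {A : Fin N} (hpc : s.pc A = .s34) : score s A = s.nCand A := by
  simp [score, scoreF, hpc]

lemma score_s341 {s : St N} {A : Fin N} (hpc : s.pc A = .s341) :
    score s A = s.nCand A + 1 := by simp [score, scoreF, hpc]

lemma score_other {s : St N} {A : Fin N} (hpc : s.pc A ≠ .s341) : score s A = s.nCand A := by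
  simp [score, scoreF, hpc]

lemma pair_pres {q : Fin N} {s s' : St N} (hs : Step q s s') (h : Inv s) :
    ∀ A B, A ≠ B → isSP (s'.pc A) → isSP (s'.pc B) → exam s' A B → exam s' B A →
      score s' A ≤ 1 → (score s' A = 0 ∨ exam s' A A) →
      1 ≤ score s' B ∧ (exam s' B B → 2 ≤ score s' B) := by
  intro A B hAB hA hB hab hba hle hor
  by_cases hAq : A = q
  · subst hAq
    have hBq : B ≠ A := fun hh => hAB hh.symm
    rw [pc_ne hs hBq] at hB
    rw [exam_ne hs hBq] at hba
    rw [score_ne hs hBq, exam_ne hs hBq]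
    cases hs with
    | t33 s i hpc =>
        exfalso
        have := B.isLt
        simp [exam, examF, Function.update_self] at hab
        omega
    | t34done s i hpc hc =>
        simp [score, scoreF, Function.update_self] at hle hor
        refine h.pair A B hAB (Or.inl hpc) hB (exam_s34 hpc (by omega)) hba ?_ ?_
        · rw [score_s34 hpc]; exact hle
        · exact Or.inr (exam_s34 hpc (by omega))
    | t34cand s i j hpc hc hj hf =>
        simp [exam, examF, score, scoreF, Function.update_self] at hab hle hor
        have hqq : s.cnt A ≤ A.val + 1 := by omega
        by_cases hci : s.cnt A ≤ A.val
        · exfalso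
          have := h.selfS A (Or.inl hpc) (exam_s34 hpc hci)
          rw [score_s34 hpc] at this
          omega
        · have hBne : (B : ℕ) ≠ A.val := fun hh => hBq (Fin.ext hh)
          have hcB : s.cnt A ≤ B.val := by omega
          refine h.pair A B hAB (Or.inl hpc) hB (exam_s34 hpc hcB) hba ?_ ?_
          · rw [score_s34 hpc]; omega
          · exact Or.inl (by rw [score_s34 hpc]; omega)
    | t34nocand s i j hpc hc hj hf =>
        simp [exam, examF, score, scoreF, Function.update_self, Function.update_apply]
          at hab hle hor
        have hBj : B ≠ j := by
          intro hh
          exact hf (hh ▸ h.flagC B (Or.inr hB))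
        have hij : A ≠ j := by
          intro hh
          exact hf (hh ▸ h.flagC A (Or.inr (Or.inl hpc)))
        have hBv : (B : ℕ) ≠ (j : ℕ) := fun hh => hBj (Fin.ext hh)
        have hiv : A.val ≠ (j : ℕ) := fun hh => hij (Fin.ext hh)
        have hcB : s.cnt A ≤ B.val := by omega
        refine h.pair A B hAB (Or.inl hpc) hB (exam_s34 hpc hcB) hba ?_ ?_
        · rw [score_s34 hpc]; omega
        · rcases hor with h0 | h0
          · exact Or.inl (by rw [score_s34 hpc]; omega)
          · exact Or.inr (exam_s34 hpc (by omega))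
    | t341 s i hpc =>
        simp [exam, examF, score, scoreF, Function.update_self] at hab hle hor
        refine h.pair A B hAB (by simp [isSP, hpc]) hB (exam_s341 hpc (by omega)) hba ?_ ?_
        · rw [score_s341 hpc]; omega
        · exact Or.inr (exam_s341 hpc (by omega))
    | t35yes s i hpc ht hn =>
        refine h.pair A B hAB (by simp [isSP, hpc]) hB (by simp [exam, examF, hpc]) hba ?_ ?_
        · simpa [score, scoreF, hpc, Function.update_self] using hle
        · exact Or.inr (by simp [exam, examF, hpc])
    | t351 s i hpc =>
        refine h.pair A B hAB (by simp [isSP, hpc]) hB (by simp [exam, examF, hpc]) hba ?_ ?_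
        · simpa [score, scoreF, hpc, Function.update_self] using hle
        · exact Or.inr (by simp [exam, examF, hpc])
    | _ => exfalso; simp_all [isSP, Function.update_self]
  · by_cases hBq : B = q
    · subst hBq
      rw [pc_ne hs hAq] at hA
      rw [exam_ne hs hAq] at hab
      rw [score_ne hs hAq] at hle
      rw [score_ne hs hAq] at hor
      rw [exam_ne hs hAq] at hor
      cases hs with
      | t33 s i hpc =>
          exfalso
          have := A.isLt
          simp [exam, examF, Function.update_self] at hba
          omega
      | t34done s i hpc hc =>
          have hp := h.pair A B hAB hA (Or.inl hpc) hab (exam_s34 hpc (by omega)) hle hor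
          have h2 := hp.2 (exam_s34 hpc (by omega))
          rw [score_s34 hpc] at hp h2
          constructor
          · simpa [score, scoreF, Function.update_self] using hp.1
          · intro _
            simpa [score, scoreF, Function.update_self] using h2
      | t34cand s i j hpc hc hj hf =>
          simp [exam, examF, score, scoreF, Function.update_self] at hba ⊢
          intro hqq
          by_cases hci : s.cnt B ≤ B.val
          · have := h.selfS B (Or.inl hpc) (exam_s34 hpc hci)
            rw [score_s34 hpc] at this
            omega
          · have hAv : A.val ≠ (B : ℕ) := fun hh => hAq (Fin.ext hh)
            have hcA : s.cnt B ≤ A.val := by omega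
            have hp := h.pair A B hAB hA (Or.inl hpc) hab (exam_s34 hpc hcA) hle hor
            have := hp.1
            rw [score_s34 hpc] at this
            omega
      | t34nocand s i j hpc hc hj hf =>
          simp [exam, examF, score, scoreF, Function.update_self, Function.update_apply]
            at hba ⊢
          have hAj : A ≠ j := by
            intro hh
            exact hf (hh ▸ h.flagC A (Or.inr hA))
          have hij : B ≠ j := by
            intro hh
            exact hf (hh ▸ h.flagC B (Or.inr (Or.inl hpc)))
          have hAv : A.val ≠ (j : ℕ) := fun hh => hAj (Fin.ext hh)
          have hiv : (B : ℕ) ≠ (j : ℕ) := fun hh => hij (Fin.ext hh)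
          have hcA : s.cnt B ≤ A.val := by omega
          have hp := h.pair A B hAB hA (Or.inl hpc) hab (exam_s34 hpc hcA) hle hor
          have h1 := hp.1
          rw [score_s34 hpc] at h1
          refine ⟨h1, ?_⟩
          intro hqq
          have h2 := hp.2 (exam_s34 hpc (by omega))
          rw [score_s34 hpc] at h2
          exact h2
      | t341 s i hpc =>
          simp [exam, examF, score, scoreF, Function.update_self] at hba ⊢
          have hp := h.pair A B hAB hA (by simp [isSP, hpc]) hab
            (exam_s341 hpc (by omega)) hle hor
          intro hqq
          have h2 := hp.2 (exam_s341 hpc (by omega))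
          rw [score_s341 hpc] at h2
          omega
      | t35yes s i hpc ht hn =>
          have hp := h.pair A B hAB hA (by simp [isSP, hpc]) hab (by simp [exam, examF, hpc])
            hle hor
          have h2 := hp.2 (by simp [exam, examF, hpc])
          constructor
          · simpa [score, scoreF, Function.update_self, hpc] using hp.1
          · intro _
            simpa [score, scoreF, Function.update_self, hpc] using h2
      | t351 s i hpc =>
          have hp := h.pair A B hAB hA (by simp [isSP, hpc]) hab (by simp [exam, examF, hpc])
            hle hor
          have h2 := hp.2 (by simp [exam, examF, hpc])
          constructor
          · simpa [score, scoreF, Function.update_self, hpc] using hp.1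
          · intro _
            simpa [score, scoreF, Function.update_self, hpc] using h2
      | _ => exfalso; simp_all [isSP, Function.update_self]
    · rw [pc_ne hs hAq] at hA
      rw [pc_ne hs hBq] at hB
      rw [exam_ne hs hAq] at hab
      rw [exam_ne hs hBq] at hba
      rw [score_ne hs hAq] at hle
      rw [score_ne hs hAq] at hor
      rw [exam_ne hs hAq] at hor
      rw [score_ne hs hBq, exam_ne hs hBq]
      exact h.pair A B hAB hA hB hab hba hle hor

end Sym

namespace Sym
variable {N : ℕ}

lemma crit_key {q : Fin N} {s s' : St N} (hs : Step q s s') (h : Inv s) :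
    ∀ k, k ≠ q → isCrit (s'.pc k) → isCrit (s'.pc q) → False := by
  intro k hk hck hcq
  rw [pc_ne hs hk] at hck
  cases hs with
  | t35yes _ _ hpc ht hn =>
      rcases hck with h1 | h1 | h1 | h1 | h1 | h1
      · have hp := h.pair k q hk (by simp [isSP, h1]) (by simp [isSP, hpc])
          (by simp [exam, examF, h1]) (by simp [exam, examF, hpc])
          (by rw [score_other (by simp [h1])]; rw [h.nOne k (Or.inl h1)])
          (Or.inr (by simp [exam, examF, h1]))
        have h2 := hp.2 (by simp [exam, examF, hpc])
        rw [score_other (by simp [hpc]), hn] at h2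
        omega
      · have hp := h.pair k q hk (by simp [isSP, h1]) (by simp [isSP, hpc])
          (by simp [exam, examF, h1]) (by simp [exam, examF, hpc])
          (by rw [score_other (by simp [h1])]; rw [h.nOne k (Or.inr h1)])
          (Or.inr (by simp [exam, examF, h1]))
        have h2 := hp.2 (by simp [exam, examF, hpc])
        rw [score_other (by simp [hpc]), hn] at h2
        omega
      · have := h.csT k h1; rw [ht] at this; simp at this
      · have := h.exT k (Or.inl h1); rw [ht] at this; simp at this
      · have := h.exT k (Or.inr (Or.inl h1)); rw [ht] at this; simp at this
      · have := h.exT k (Or.inr (Or.inr h1)); rw [ht] at this; simp at this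
  | t4 _ _ hpc ht =>
      rcases hck with h1 | h1 | h1 | h1 | h1 | h1
      · rcases h.candT k (Or.inl h1) with h2 | h2 <;> rw [ht] at h2 <;> simp_all
      · rcases h.candT k (Or.inr h1) with h2 | h2 <;> rw [ht] at h2 <;> simp_all
      · have := h.csT k h1; rw [ht] at this
        simp only [Turn.id.injEq] at this
        exact hk (Fin.ext (by rw [this]))
      · have := h.exT k (Or.inl h1); rw [ht] at this; simp at this
      · have := h.exT k (Or.inr (Or.inl h1)); rw [ht] at this; simp at this
      · have := h.exT k (Or.inr (Or.inr h1)); rw [ht] at this; simp at this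
  | t351 _ _ hpc => exact h.mutex k q hk hck (Or.inl hpc)
  | tcs _ _ hpc => exact h.mutex k q hk hck (Or.inr (Or.inr (Or.inl hpc)))
  | t5 _ _ hpc => exact h.mutex k q hk hck (by simp [isCrit, hpc])
  | t6exit _ _ hpc hc => exact h.mutex k q hk hck (by simp [isCrit, hpc])
  | t6found _ _ hpc hnt hcnt hf => exact h.mutex k q hk hck (by simp [isCrit, hpc])
  | t6notfound _ _ hpc hnt hcnt hf => exact h.mutex k q hk hck (by simp [isCrit, hpc])
  | t63free _ _ hpc hn => exact h.mutex k q hk hck (by simp [isCrit, hpc])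
  | t63id _ _ b hpc hn => exact h.mutex k q hk hck (by simp [isCrit, hpc])
  | _ => simp_all [isCrit, Function.update_self]

lemma mutex_pres {q : Fin N} {s s' : St N} (hs : Step q s s') (h : Inv s) :
    ∀ i j, i ≠ j → isCrit (s'.pc i) → isCrit (s'.pc j) → False := by
  intro i j hij hci hcj
  by_cases hiq : i = q
  · exact crit_key hs h j (fun hh => hij (by rw [hiq, hh])) hcj (hiq ▸ hci)
  · by_cases hjq : j = q
    · exact crit_key hs h i hiq hci (hjq ▸ hcj)
    · rw [pc_ne hs hiq] at hci
      rw [pc_ne hs hjq] at hcj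
      exact h.mutex i j hij hci hcj

lemma csT_pres {q : Fin N} {s s' : St N} (hs : Step q s s') (h : Inv s) :
    ∀ i, s'.pc i = .cs → s'.turn = .id i := by
  intro i hpcs
  by_cases hiq : i = q
  · subst hiq
    cases hs <;> simp_all [Function.update_self]
  · have hpc' : s.pc i = .cs := by rw [← pc_ne hs hiq]; exact hpcs
    have h0 := h.csT i hpc'
    have hcrit : isCrit (s.pc i) := Or.inr (Or.inr (Or.inl hpc'))
    cases hs with
    | t351 _ _ hq => exact (h.mutex i q hiq hcrit (Or.inl hq)).elim
    | tcs _ _ hq => exact (h.mutex i q hiq hcrit (Or.inr (Or.inr (Or.inl hq)))).elim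
    | t63free _ _ hq hn => exact (h.mutex i q hiq hcrit (by simp [isCrit, hq])).elim
    | t63id _ _ b hq hn => exact (h.mutex i q hiq hcrit (by simp [isCrit, hq])).elim
    | _ => exact h0

lemma exT_pres {q : Fin N} {s s' : St N} (hs : Step q s s') (h : Inv s) :
    ∀ i, (s'.pc i = .s5 ∨ s'.pc i = .s6 ∨ s'.pc i = .s63) → s'.turn = .thinking := by
  intro i hi
  by_cases hiq : i = q
  · have h1 := h.exT i
    subst hiq
    cases hs <;> simp_all [Function.update_self]
  · have hi' : s.pc i = .s5 ∨ s.pc i = .s6 ∨ s.pc i = .s63 := by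
      rw [← pc_ne hs hiq]; exact hi
    have h0 := h.exT i hi'
    have hcrit : isCrit (s.pc i) := by
      rcases hi' with h1 | h1 | h1 <;> simp [isCrit, h1]
    cases hs with
    | t351 _ _ hq => exact (h.mutex i q hiq hcrit (Or.inl hq)).elim
    | tcs _ _ hq => exact (h.mutex i q hiq hcrit (Or.inr (Or.inr (Or.inl hq)))).elim
    | t63free _ _ hq hn => exact (h.mutex i q hiq hcrit (by simp [isCrit, hq])).elim
    | t63id _ _ b hq hn => exact (h.mutex i q hiq hcrit (by simp [isCrit, hq])).elim
    | _ => exact h0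

lemma candT_pres {q : Fin N} {s s' : St N} (hs : Step q s s') (h : Inv s) :
    ∀ i, (s'.pc i = .s351 ∨ s'.pc i = .s352) → s'.turn = .free ∨ s'.turn = .id i := by
  intro i hi
  by_cases hiq : i = q
  · have h1 := h.candT i
    subst hiq
    cases hs <;> simp_all [Function.update_self]
  · have hi' : s.pc i = .s351 ∨ s.pc i = .s352 := by
      rw [← pc_ne hs hiq]; exact hi
    have h0 := h.candT i hi'
    have hcrit : isCrit (s.pc i) := by
      rcases hi' with h1 | h1 <;> simp [isCrit, h1]
    cases hs with
    | t351 _ _ hq => exact (h.mutex i q hiq hcrit (Or.inl hq)).elim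
    | tcs _ _ hq => exact (h.mutex i q hiq hcrit (Or.inr (Or.inr (Or.inl hq)))).elim
    | t63free _ _ hq hn => exact (h.mutex i q hiq hcrit (by simp [isCrit, hq])).elim
    | t63id _ _ b hq hn => exact (h.mutex i q hiq hcrit (by simp [isCrit, hq])).elim
    | _ => exact h0

lemma inv_init : Inv (initSt N) := by
  constructor <;> intro i <;> simp [initSt, isSP, isCrit, exam, examF]

lemma inv_step {q : Fin N} {s s' : St N} (hs : Step q s s') (h : Inv s) : Inv s' :=
  ⟨flagC_pres hs h, selfS_pres hs h, pair_pres hs h, nOne_pres hs h, mutex_pres hs h,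
   csT_pres hs h, exT_pres hs h, candT_pres hs h, c341_pres hs h⟩

lemma step_of_sched (e : Exec N) {m : ℕ} {q : Fin N} (hsch : e.sched m = some q) :
    Step q (e.states m) (e.states (m + 1)) := by
  have h := e.step m
  rw [hsch] at h
  exact h

lemma eq_of_sched_none (e : Exec N) {m : ℕ} (hsch : e.sched m = none) :
    e.states (m + 1) = e.states m := by
  have h := e.step m
  rw [hsch] at h
  exact h

lemma inv_all (e : Exec N) : ∀ n, Inv (e.states n) := by
  intro n
  induction n with
  | zero => rw [e.init]; exact inv_init
  | succ n ih =>
      cases hsch : e.sched n with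
      | none => rw [eq_of_sched_none e hsch]; exact ih
      | some q => exact inv_step (step_of_sched e hsch) ih

end Sym

namespace Sym
variable {N : ℕ}

lemma turn_eq {q : Fin N} {s s' : St N} (hs : Step q s s') (hnc : ¬ isCrit (s.pc q)) :
    s'.turn = s.turn := by
  cases hs with
  | t351 _ _ hpc => exact absurd (Or.inl hpc) hnc
  | tcs _ _ hpc => exact absurd (Or.inr (Or.inr (Or.inl hpc))) hnc
  | t63free _ _ hpc hn => exact absurd (by simp [isCrit, hpc]) hnc
  | t63id _ _ b hpc hn => exact absurd (by simp [isCrit, hpc]) hnc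
  | _ => rfl

lemma not_crit_after {a q : Fin N} {s s' : St N} (hs : Step q s s')
    (hnc : ¬ isCrit (s.pc q)) (hturn : s.turn = .id a) (hqa : q ≠ a) :
    ¬ isCrit (s'.pc q) := by
  cases hs with
  | t35yes _ _ hpc ht hn => rw [ht] at hturn; simp at hturn
  | t4 _ _ hpc ht =>
      rw [ht] at hturn
      simp only [Turn.id.injEq] at hturn
      exact absurd (Fin.ext (congrArg Fin.val hturn)) hqa
  | t351 _ _ hpc => exact absurd (Or.inl hpc) hnc
  | tcs _ _ hpc => exact absurd (Or.inr (Or.inr (Or.inl hpc))) hnc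
  | t5 _ _ hpc => exact absurd (by simp [isCrit, hpc]) hnc
  | t6exit _ _ hpc hc => exact absurd (by simp [isCrit, hpc]) hnc
  | t6found _ _ hpc hnt hcnt hf => exact absurd (by simp [isCrit, hpc]) hnc
  | t6notfound _ _ hpc hnt hcnt hf => exact absurd (by simp [isCrit, hpc]) hnc
  | t63free _ _ hpc hn => exact absurd (by simp [isCrit, hpc]) hnc
  | t63id _ _ b hpc hn => exact absurd (by simp [isCrit, hpc]) hnc
  | _ => simp [isCrit, Function.update_self]

/-- The "process `a` holds the turn" predicate maintained until `a` enters CS. -/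
def Wst (a : Fin N) (s : St N) : Prop :=
  s.turn = .id a ∧
  (s.pc a = .s2 ∨ s.pc a = .s32 ∨ s.pc a = .s352 ∨ s.pc a = .s36 ∨
   s.pc a = .s37 ∨ s.pc a = .s4) ∧
  ∀ k, k ≠ a → ¬ isCrit (s.pc k)

lemma W_step {a q : Fin N} {s s' : St N} (hW : Wst a s) (hs : Step q s s') :
    Wst a s' ∨ s'.pc a = .cs := by
  obtain ⟨ht, hpa, hcr⟩ := hW
  by_cases hqa : q = a
  · subst hqa
    cases hs with
    | t2id _ _ j hpc ht2 =>
        refine Or.inl ⟨ht, by simp, fun k hk => ?_⟩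
        simpa [Function.update_apply, hk] using hcr k hk
    | t32exit _ _ hpc hc =>
        refine Or.inl ⟨ht, by simp, fun k hk => ?_⟩
        simpa [Function.update_apply, hk] using hcr k hk
    | t352 _ _ hpc =>
        refine Or.inl ⟨ht, by simp, fun k hk => ?_⟩
        simpa [Function.update_apply, hk] using hcr k hk
    | t36yes _ _ hpc hc =>
        refine Or.inl ⟨ht, by simp, fun k hk => ?_⟩
        simpa [Function.update_apply, hk] using hcr k hk
    | t36no _ _ hpc hc =>
        refine Or.inl ⟨ht, by simp, fun k hk => ?_⟩
        simpa [Function.update_apply, hk] using hcr k hk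
    | t37 _ _ hpc =>
        refine Or.inl ⟨ht, by simp, fun k hk => ?_⟩
        simpa [Function.update_apply, hk] using hcr k hk
    | t4 _ _ hpc ht2 => exact Or.inr (by simp)
    | _ => simp_all
  · have hnc := hcr q hqa
    have haq : a ≠ q := fun hh => hqa hh.symm
    refine Or.inl ⟨?_, ?_, fun k hk => ?_⟩
    · rw [turn_eq hs hnc]; exact ht
    · rwa [pc_ne hs haq]
    · by_cases hkq : k = q
      · subst hkq; exact not_crit_after hs hnc ht hqa
      · rw [pc_ne hs hkq]; exact hcr k hk

lemma W_enabled {a : Fin N} {s : St N} (hW : Wst a s) : Enabled a s := by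
  obtain ⟨ht, hpa, _⟩ := hW
  rcases hpa with h1 | h1 | h1 | h1 | h1 | h1
  · exact ⟨_, Step.t2id s a a h1 ht⟩
  · exact ⟨_, Step.t32exit s a h1 (by rw [ht]; simp)⟩
  · exact ⟨_, Step.t352 s a h1⟩
  · exact ⟨_, Step.t36yes s a h1 (Or.inl (by rw [ht]; simp))⟩
  · exact ⟨_, Step.t37 s a h1⟩
  · exact ⟨_, Step.t4 s a h1 ht⟩

def rk : PC → ℕ
  | .s352 => 5
  | .s36 => 4
  | .s32 => 3
  | .s37 => 2
  | .s2 => 2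
  | .s4 => 1
  | _ => 0

lemma W_dec {a : Fin N} {s s' : St N} (hW : Wst a s) (hs : Step a s s') :
    s'.pc a = .cs ∨ rk (s'.pc a) < rk (s.pc a) := by
  obtain ⟨ht, hpa, hcr⟩ := hW
  cases hs with
  | t2id _ _ j hpc ht2 => exact Or.inr (by simp [rk, hpc, Function.update_self])
  | t32exit _ _ hpc hc => exact Or.inr (by simp [rk, hpc, Function.update_self])
  | t352 _ _ hpc => exact Or.inr (by simp [rk, hpc, Function.update_self])
  | t36yes _ _ hpc hc => exact Or.inr (by simp [rk, hpc, Function.update_self])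
  | t36no _ _ hpc hc => exact Or.inr (by simp [rk, hpc, Function.update_self])
  | t37 _ _ hpc => exact Or.inr (by simp [rk, hpc, Function.update_self])
  | t4 _ _ hpc ht2 => exact Or.inl (by simp [Function.update_self])
  | _ => simp_all

end Sym

namespace Sym
variable {N : ℕ}

lemma W_init1 {p a : Fin N} {s s' : St N} (hInv : Inv s) (hs : Step p s s')
    (hcase : (p = a ∧ s.pc p = PC.s351) ∨
      (s.pc p = PC.s63 ∧ s.nextTurn p = Turn.id a ∧
        (s.pc a = PC.s2 ∨ s.pc a = PC.s4))) :
    Wst a s' := by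
  rcases hcase with ⟨hpa, hpc⟩ | ⟨hpc, hnt, hpa2⟩
  · subst hpa
    cases hs with
    | t351 _ _ hq =>
        refine ⟨rfl, by simp, fun k hk => ?_⟩
        intro hck
        exact hInv.mutex k p hk (by simpa [Function.update_apply, hk] using hck) (Or.inl hq)
    | _ => simp_all
  · have hap : a ≠ p := by
      intro hh
      rw [hh] at hpa2
      rcases hpa2 with h1 | h1 <;> rw [hpc] at h1 <;> simp at h1
    cases hs with
    | t63free _ _ hq hn => rw [hn] at hnt; simp at hnt
    | t63id _ _ b hq hn =>
        rw [hn] at hnt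
        simp only [Turn.id.injEq] at hnt
        subst hnt
        refine ⟨rfl, ?_, fun k hk => ?_⟩
        · rcases hpa2 with h1 | h1 <;> simp [Function.update_apply, hap, h1]
        · by_cases hkp : k = p
          · subst hkp; simp [Function.update_self, isCrit]
          · intro hck
            exact hInv.mutex k p hkp (by simpa [Function.update_apply, hkp] using hck)
              (by simp [isCrit, hq])
    | _ => simp_all

end Sym

open Sym in
/-- **Lemma: a process with the turn enters the critical section
(symmetric algorithm).** In every fair execution, if at some step `n` the
shared variable `turn` is assigned the value `a` — either by process `a`
itself taking the transition at state 3.5.1 that sets `turn := a`, or by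
some process at state 6.3 with `nextTurn = a` setting `turn := nextTurn`
while process `a` waits at state 2 or state 4 — then process `a` eventually
enters the critical section. -/
theorem sym_process_with_turn_enters {N : ℕ} (e : Exec N) (hfair : e.Fair)
    (n : ℕ) (a : Fin N)
    (hassign : ∃ p : Fin N, e.sched n = some p ∧
      ((p = a ∧ (e.states n).pc p = PC.s351) ∨
       ((e.states n).pc p = PC.s63 ∧ (e.states n).nextTurn p = Turn.id a ∧
        ((e.states n).pc a = PC.s2 ∨ (e.states n).pc a = PC.s4)))) :
    ∃ m, n < m ∧ (e.states m).pc a = PC.cs := by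
  classical
  obtain ⟨p, hsch, hcase⟩ := hassign
  have hInv := Sym.inv_all e n
  have hstep : Step p (e.states n) (e.states (n + 1)) := Sym.step_of_sched e hsch
  have hW1 : Sym.Wst a (e.states (n + 1)) := Sym.W_init1 hInv hstep hcase
  by_contra hno
  push_neg at hno
  have hWall : ∀ m, n < m → Sym.Wst a (e.states m) := by
    have key : ∀ k, Sym.Wst a (e.states (n + 1 + k)) := by
      intro k
      induction k with
      | zero => exact hW1
      | succ k ih =>
          cases hsch2 : e.sched (n + 1 + k) with
          | none =>
              have heq := Sym.eq_of_sched_none e hsch2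
              exact heq ▸ ih
          | some q =>
              have hst := Sym.step_of_sched e hsch2
              rcases Sym.W_step ih hst with h1 | h1
              · exact h1
              · exact absurd h1 (hno (n + 1 + k + 1) (by omega))
    intro m hm
    have := key (m - (n + 1))
    rwa [show n + 1 + (m - (n + 1)) = m by omega] at this
  have hmono : ∀ m, n < m → ∀ k,
      Sym.rk ((e.states (m + k)).pc a) ≤ Sym.rk ((e.states m).pc a) := by
    intro m hm k
    induction k with
    | zero => exact le_rfl
    | succ k ih =>
        have hd : Sym.rk ((e.states (m + k + 1)).pc a) ≤ Sym.rk ((e.states (m + k)).pc a) := by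
          cases hsch2 : e.sched (m + k) with
          | none => rw [Sym.eq_of_sched_none e hsch2]
          | some q =>
              have hst := Sym.step_of_sched e hsch2
              by_cases hqa : q = a
              · subst hqa
                rcases Sym.W_dec (hWall (m + k) (by omega)) hst with h1 | h1
                · exact absurd h1 (hno (m + k + 1) (by omega))
                · exact le_of_lt h1
              · rw [Sym.pc_ne hst (fun hh => hqa hh.symm)]
        exact le_trans hd ih
  have hdesc : ∀ r m, n < m → Sym.rk ((e.states m).pc a) ≤ r → False := by
    intro r
    induction r with
    | zero =>
        intro m hm h0
        rcases (hWall m hm).2.1 with h1 | h1 | h1 | h1 | h1 | h1 <;>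
          rw [h1] at h0 <;> simp [Sym.rk] at h0
    | succ r ih =>
        intro m hm hr
        obtain ⟨m1, hm1, hsch1⟩ := hfair a m (fun m' hm' => Sym.W_enabled (hWall m' (by omega)))
        have hst := Sym.step_of_sched e hsch1
        rcases Sym.W_dec (hWall m1 (by omega)) hst with h1 | h1
        · exact hno (m1 + 1) (by omega) h1
        · have h2 : Sym.rk ((e.states m1).pc a) ≤ r + 1 := by
            have h3 := hmono m hm (m1 - m)
            rw [show m + (m1 - m) = m1 by omega] at h3
            omega
          have h4 : Sym.rk ((e.states (m1 + 1)).pc a) ≤ r := by omega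
          exact ih (m1 + 1) (by omega) h4
  exact hdesc (Sym.rk ((e.states (n + 1)).pc a)) (n + 1) (by omega) le_rfl
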